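/- arXiv:2505.23264 — 3 statements merged into one kernel-verified Lean document; each statement's English description precedes it below -/
import Mathlib

section
/- Let d, N be positive integers, let α, σ be positive real numbers, and let y_1, …, y_N ∈ ℝ^d. For x ∈ ℝ^d define v_i(x) = exp(-‖x - α·y_i‖² / (2σ²)), w_i(x) = v_i(x) / Σ_{j=1}^N v_j(x), and m(x) = Σ_{i=1}^N w_i(x)·y_i. Let F(x) := -∇² log( Σ_{i=1}^N v_i(x) ) be the negative Hessian matrix. Then for every x ∈ ℝ^d, the trace of F(x) equals d/σ² − (α²/σ⁴)·[ Σ_{i=1}^N w_i(x)·‖y_i‖² − ‖m(x)‖² ]. -/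
open scoped BigOperators
open scoped RealInnerProductSpace

lemma aux_exp_fderiv {E : Type*} [NormedAddCommGroup E] [InnerProductSpace ℝ E]
    (σ : ℝ) (hσ : σ ≠ 0) (c z : E) :
    HasFDerivAt (fun t : E => Real.exp (-‖t - c‖ ^ 2 / (2 * σ ^ 2)))
      ((-(Real.exp (-‖z - c‖ ^ 2 / (2 * σ ^ 2))) / σ ^ 2) • innerSL ℝ (z - c)) z := by
  have hfun : (fun t : E => Real.exp (-‖t - c‖ ^ 2 / (2 * σ ^ 2)))
      = fun t : E => Real.exp (-(2 * σ ^ 2)⁻¹ * ⟪t - c, t - c⟫) := by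
    funext t
    congr 1
    rw [real_inner_self_eq_norm_sq]
    ring
  rw [hfun]
  have h1 : HasFDerivAt (fun t : E => t - c) (ContinuousLinearMap.id ℝ E) z :=
    (hasFDerivAt_id z).sub_const c
  have h2 := (h1.inner (𝕜 := ℝ) h1).const_mul (-(2 * σ ^ 2)⁻¹)
  have h3 := h2.exp
  refine h3.congr_fderiv ?_
  ext u
  simp only [ContinuousLinearMap.smul_apply, ContinuousLinearMap.comp_apply,
    ContinuousLinearMap.prod_apply, ContinuousLinearMap.id_apply, fderivInnerCLM_apply,
    innerSL_apply_apply, smul_eq_mul]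
  rw [real_inner_comm u (z - c)]
  rw [show -(2 * σ ^ 2)⁻¹ * ⟪z - c, z - c⟫ = -‖z - c‖ ^ 2 / (2 * σ ^ 2) by
    rw [real_inner_self_eq_norm_sq]; ring]
  field_simp
  ring

/-- Proposition 5: the trace of the diffusion Fisher matrix
`F(x) = -∇² log Σᵢ vᵢ(x)` equals `d/σ² − (α²/σ⁴)·[Σᵢ wᵢ(x)·‖yᵢ‖² − ‖m(x)‖²]`. -/
theorem diffusion_fisher_trace
    (d N : ℕ) (hd : 0 < d) (hN : 0 < N) (α σ : ℝ) (hα : 0 < α) (hσ : 0 < σ)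
    (y : Fin N → EuclideanSpace ℝ (Fin d))
    (v w : Fin N → EuclideanSpace ℝ (Fin d) → ℝ)
    (m : EuclideanSpace ℝ (Fin d) → EuclideanSpace ℝ (Fin d))
    (L : EuclideanSpace ℝ (Fin d) → ℝ)
    (F : EuclideanSpace ℝ (Fin d) → Matrix (Fin d) (Fin d) ℝ)
    (hv : ∀ i x, v i x = Real.exp (-‖x - α • y i‖ ^ 2 / (2 * σ ^ 2)))
    (hw : ∀ i x, w i x = v i x / ∑ j, v j x)
    (hm : ∀ x, m x = ∑ i, w i x • y i)
    (hL : ∀ x, L x = Real.log (∑ i, v i x))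
    (hF : ∀ x, F x = -(Matrix.of fun k l =>
        (fderiv ℝ (fun z => gradient L z) x (EuclideanSpace.single l 1)) k)) :
    ∀ x, Matrix.trace (F x) =
      (d : ℝ) / σ ^ 2 -
        (α ^ 2 / σ ^ 4) * ((∑ i, w i x * ‖y i‖ ^ 2) - ‖m x‖ ^ 2) := by
  intro x
  have hσ2 : (σ : ℝ) ^ 2 ≠ 0 := by positivity
  haveI : Nonempty (Fin N) := Fin.pos_iff_nonempty.mp hN
  have hvpos : ∀ i z, 0 < v i z := fun i z => by rw [hv]; exact Real.exp_pos _
  have hSpos : ∀ z, 0 < ∑ j, v j z := fun z =>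
    Finset.sum_pos (fun j _ => hvpos j z) Finset.univ_nonempty
  -- derivative of each v i
  have hDv : ∀ i z, HasFDerivAt (v i)
      ((-(v i z) / σ ^ 2) • innerSL ℝ (z - α • y i)) z := by
    intro i z
    have hfun : v i = fun t => Real.exp (-‖t - α • y i‖ ^ 2 / (2 * σ ^ 2)) := funext (hv i)
    rw [hfun]
    exact aux_exp_fderiv σ hσ.ne' (α • y i) z
  -- derivative of the sum S
  have hDS : ∀ z, HasFDerivAt (fun t => ∑ j, v j t)
      (∑ j, (-(v j z) / σ ^ 2) • innerSL ℝ (z - α • y j)) z := fun z =>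
    HasFDerivAt.fun_sum fun j _ => hDv j z
  -- key scalar sum identity
  have hsum1 : ∀ (z : EuclideanSpace ℝ (Fin d)) (u : EuclideanSpace ℝ (Fin d)),
      (∑ j, (-(v j z) / σ ^ 2) * ⟪z - α • y j, u⟫)
        = (σ ^ 2)⁻¹ * (α * (∑ j, v j z * ⟪y j, u⟫) - (∑ j, v j z) * ⟪z, u⟫) := by
    intro z u
    have h : ∀ j : Fin N, (-(v j z) / σ ^ 2) * ⟪z - α • y j, u⟫
        = (σ ^ 2)⁻¹ * α * (v j z * ⟪y j, u⟫) - (σ ^ 2)⁻¹ * ⟪z, u⟫ * v j z := by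
      intro j
      rw [inner_sub_left, real_inner_smul_left]
      ring
    rw [Finset.sum_congr rfl fun j _ => h j, Finset.sum_sub_distrib,
      ← Finset.mul_sum, ← Finset.mul_sum]
    ring
  -- inner product with m
  have hmx : ∀ (z : EuclideanSpace ℝ (Fin d)) (u : EuclideanSpace ℝ (Fin d)),
      ⟪m z, u⟫ = (∑ j, v j z)⁻¹ * ∑ j, v j z * ⟪y j, u⟫ := by
    intro z u
    rw [hm, sum_inner]
    have h : ∀ j : Fin N, ⟪w j z • y j, u⟫ = (∑ i, v i z)⁻¹ * (v j z * ⟪y j, u⟫) := by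
      intro j
      rw [real_inner_smul_left, hw]
      ring
    rw [Finset.sum_congr rfl fun j _ => h j, ← Finset.mul_sum]
  -- gradient of L
  have hGrad : ∀ z, HasGradientAt L ((σ ^ 2)⁻¹ • (α • m z - z)) z := by
    intro z
    rw [hasGradientAt_iff_hasFDerivAt]
    have hLf : L = fun t => Real.log (∑ j, v j t) := funext hL
    rw [hLf]
    refine ((hDS z).log (hSpos z).ne').congr_fderiv ?_
    ext u
    simp only [ContinuousLinearMap.smul_apply, ContinuousLinearMap.sum_apply,
      innerSL_apply_apply, InnerProductSpace.toDual_apply_apply, smul_eq_mul]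
    rw [hsum1 z u, real_inner_smul_left, inner_sub_left, real_inner_smul_left, hmx z u]
    have hS := (hSpos z).ne'
    field_simp
    try exact Or.inl trivial
  -- derivative of w i at x
  have hDw : ∀ i, HasFDerivAt (w i)
      (((α / σ ^ 2) * w i x) • innerSL ℝ (y i - m x)) x := by
    intro i
    have hwf : w i = fun t => v i t * (∑ j, v j t)⁻¹ := by
      funext t; rw [hw, div_eq_mul_inv]
    rw [hwf]
    have hinv : HasFDerivAt (fun t => (∑ j, v j t)⁻¹)
        ((-(((∑ j, v j x)) ^ 2)⁻¹) • (∑ j, (-(v j x) / σ ^ 2) • innerSL ℝ (x - α • y j))) x :=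
      (hasDerivAt_inv (hSpos x).ne').comp_hasFDerivAt x (hDS x)
    refine ((hDv i x).mul hinv).congr_fderiv ?_
    ext u
    simp only [ContinuousLinearMap.add_apply, ContinuousLinearMap.smul_apply,
      ContinuousLinearMap.smulRight_apply, ContinuousLinearMap.sum_apply,
      innerSL_apply_apply, smul_eq_mul]
    rw [hsum1 x u]
    simp only [inner_sub_left, real_inner_smul_left]
    rw [hmx x u]
    have hS := (hSpos x).ne'
    field_simp
    ring
  -- derivative of m at x
  have hDm : HasFDerivAt m
      (∑ i, (((α / σ ^ 2) * w i x) • innerSL ℝ (y i - m x)).smulRight (y i)) x := by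
    have hmf : m = fun t => ∑ i, w i t • y i := funext hm
    have h := HasFDerivAt.fun_sum (u := Finset.univ) fun i _ => (hDw i).smul_const (y i)
    rw [← hmf] at h
    exact h
  -- derivative of the gradient field
  have hDG : HasFDerivAt (fun z => gradient L z)
      ((σ ^ 2)⁻¹ • (α • (∑ i, (((α / σ ^ 2) * w i x) • innerSL ℝ (y i - m x)).smulRight (y i))
        - ContinuousLinearMap.id ℝ (EuclideanSpace ℝ (Fin d)))) x := by
    have hGf : (fun z => gradient L z) = fun z => (σ ^ 2)⁻¹ • (α • m z - z) :=
      funext fun z => (hGrad z).gradient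
    rw [hGf]
    exact ((hDm.const_smul α).sub (hasFDerivAt_id x)).const_smul ((σ ^ 2)⁻¹)
  have hfd := hDG.fderiv
  -- evaluate the diagonal entries
  have hdiag : ∀ k : Fin d,
      (fderiv ℝ (fun z => gradient L z) x (EuclideanSpace.single k 1)) k
        = (σ ^ 2)⁻¹ * (α * (∑ i, ((α / σ ^ 2) * w i x) * ((y i k - m x k) * y i k)) - 1) := by
    intro k
    rw [hfd]
    simp only [ContinuousLinearMap.smul_apply, ContinuousLinearMap.sub_apply,
      ContinuousLinearMap.sum_apply, ContinuousLinearMap.smulRight_apply,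
      ContinuousLinearMap.id_apply, innerSL_apply_apply, smul_eq_mul]
    rw [PiLp.smul_apply, PiLp.sub_apply, PiLp.smul_apply]
    rw [show ((∑ i, (((α / σ ^ 2) * w i x) * ⟪y i - m x, EuclideanSpace.single k 1⟫) • y i) : EuclideanSpace ℝ (Fin d)) k
        = ∑ i, (((α / σ ^ 2) * w i x) * ⟪y i - m x, EuclideanSpace.single k 1⟫) * y i k by
      rw [WithLp.ofLp_sum, Finset.sum_apply]; exact Finset.sum_congr rfl fun i _ => by rw [PiLp.smul_apply, smul_eq_mul]]
    have hek : ∀ a : EuclideanSpace ℝ (Fin d), ⟪a, EuclideanSpace.single k (1:ℝ)⟫ = a k := by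
      intro a; rw [EuclideanSpace.inner_single_right]; simp
    simp only [hek]
    rw [EuclideanSpace.single_apply, if_pos rfl]
    simp only [smul_eq_mul, PiLp.sub_apply]
    rw [Finset.sum_congr rfl fun i _ => mul_assoc (α / σ ^ 2 * w i x) (y i k - m x k) (y i k)]
  -- assemble the trace
  have htr : Matrix.trace (F x)
      = -∑ k : Fin d, (σ ^ 2)⁻¹ * (α * (∑ i, ((α / σ ^ 2) * w i x) * ((y i k - m x k) * y i k)) - 1) := by
    rw [hF x, Matrix.trace_neg]
    congr 1
    rw [Matrix.trace]
    exact Finset.sum_congr rfl fun k _ => hdiag k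
  rw [htr]
  have hterm : ∀ k : Fin d,
      (σ ^ 2)⁻¹ * (α * (∑ i, ((α / σ ^ 2) * w i x) * ((y i k - m x k) * y i k)) - 1)
        = (α ^ 2 / σ ^ 4) * (∑ i, w i x * ((y i k - m x k) * y i k)) - (σ ^ 2)⁻¹ := by
    intro k
    rw [Finset.sum_congr rfl fun i _ => mul_assoc (α / σ ^ 2) (w i x) ((y i k - m x k) * y i k),
      ← Finset.mul_sum]
    field_simp
  rw [Finset.sum_congr rfl fun k _ => hterm k, Finset.sum_sub_distrib, ← Finset.mul_sum,
    Finset.sum_const, Finset.card_univ, Fintype.card_fin, nsmul_eq_mul]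
  -- the key combinatorial identity
  have hnorm : ∀ a : EuclideanSpace ℝ (Fin d), ‖a‖ ^ 2 = ∑ k, a k ^ 2 := by
    intro a
    rw [← real_inner_self_eq_norm_sq, PiLp.inner_apply]
    exact Finset.sum_congr rfl fun k _ => by simp [RCLike.inner_apply, sq]
  have hm_eq : ∀ k : Fin d, m x k = ∑ i, w i x * y i k := by
    intro k
    rw [hm, WithLp.ofLp_sum, Finset.sum_apply]
    exact Finset.sum_congr rfl fun i _ => by rw [PiLp.smul_apply, smul_eq_mul]
  have key : ∑ k : Fin d, ∑ i, w i x * ((y i k - m x k) * y i k)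
      = (∑ i, w i x * ‖y i‖ ^ 2) - ‖m x‖ ^ 2 := by
    have h1 : ∀ i, ∑ k : Fin d, w i x * ((y i k - m x k) * y i k)
        = w i x * ‖y i‖ ^ 2 - w i x * (∑ k, m x k * y i k) := by
      intro i
      have h : ∀ k : Fin d, w i x * ((y i k - m x k) * y i k)
          = w i x * (y i k ^ 2) - w i x * (m x k * y i k) := fun k => by ring
      rw [Finset.sum_congr rfl fun k _ => h k, Finset.sum_sub_distrib, ← Finset.mul_sum,
        ← Finset.mul_sum, ← hnorm (y i)]
    rw [Finset.sum_comm, Finset.sum_congr rfl fun i _ => h1 i, Finset.sum_sub_distrib]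
    congr 1
    have h2 : ∑ i, w i x * (∑ k : Fin d, m x k * y i k)
        = ∑ k : Fin d, m x k * (∑ i, w i x * y i k) := by
      simp_rw [Finset.mul_sum]
      rw [Finset.sum_comm]
      exact Finset.sum_congr rfl fun k _ => Finset.sum_congr rfl fun i _ => by ring
    rw [h2, hnorm (m x)]
    exact Finset.sum_congr rfl fun k _ => by rw [← hm_eq k]; ring
  rw [key]
  field_simp
  ring
end

section
/- Let d be a positive integer, let α, σ be positive real numbers, and let μ be a probability measure on ℝ^d with finite second moment (∫ ‖y‖² dμ(y) < ∞). For x ∈ ℝ^d define v(x, y) = exp(-‖x − α·y‖² / (2σ²)), V(x) = ∫ v(x, y) dμ(y), and m(x) = (1/V(x))·∫ v(x, y)·y dμ(y). Then V(x) > 0 for all x, the map m : ℝ^d → ℝ^d is differentiable, and its Fréchet derivative at x, viewed as a d×d matrix, equals (α/σ²)·[ (1/V(x))·∫ v(x, y)·y yᵀ dμ(y) − m(x) m(x)ᵀ ]. -/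
open scoped BigOperators
open MeasureTheory

noncomputable section AuxJPM

variable {d : ℕ}

def vA (α σ : ℝ) (x y : EuclideanSpace ℝ (Fin d)) : ℝ :=
  Real.exp (-‖x - α • y‖ ^ 2 / (2 * σ ^ 2))

def DvA (α σ : ℝ) (x y : EuclideanSpace ℝ (Fin d)) : EuclideanSpace ℝ (Fin d) →L[ℝ] ℝ :=
  (-(vA α σ x y) / σ ^ 2) • innerSL ℝ (x - α • y)

lemma vA_pos (α σ : ℝ) (x y : EuclideanSpace ℝ (Fin d)) : 0 < vA α σ x y := Real.exp_pos _

lemma vA_le_one (α σ : ℝ) (x y : EuclideanSpace ℝ (Fin d)) : vA α σ x y ≤ 1 := by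
  rw [vA, Real.exp_le_one_iff]
  apply div_nonpos_of_nonpos_of_nonneg
  · simp
  · positivity

lemma key_bound {σ : ℝ} (hσ : 0 < σ) (t : ℝ) :
    t * Real.exp (-t ^ 2 / (2 * σ ^ 2)) ≤ σ := by
  have hA : (0:ℝ) < Real.exp (t ^ 2 / (2 * σ ^ 2)) := Real.exp_pos _
  have ha : σ ^ 2 * (t ^ 2 / (2 * σ ^ 2)) = t ^ 2 / 2 := by
    field_simp
  have h1 : t ≤ σ * Real.exp (t ^ 2 / (2 * σ ^ 2)) := by
    nlinarith [Real.add_one_le_exp (t ^ 2 / (2 * σ ^ 2)), sq_nonneg (t - σ)]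
  have h2 : t * Real.exp (-t ^ 2 / (2 * σ ^ 2))
      = t * (Real.exp (t ^ 2 / (2 * σ ^ 2)))⁻¹ := by
    rw [neg_div, Real.exp_neg]
  rw [h2]
  calc t * (Real.exp (t ^ 2 / (2 * σ ^ 2)))⁻¹
      ≤ (σ * Real.exp (t ^ 2 / (2 * σ ^ 2))) * (Real.exp (t ^ 2 / (2 * σ ^ 2)))⁻¹ :=
        mul_le_mul_of_nonneg_right h1 (by positivity)
    _ = σ := by field_simp

lemma norm_DvA_le {σ : ℝ} (hσ : 0 < σ) (α : ℝ) (x y : EuclideanSpace ℝ (Fin d)) :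
    ‖DvA α σ x y‖ ≤ 1 / σ := by
  refine ContinuousLinearMap.opNorm_le_bound _ (by positivity) fun h => ?_
  have happ : (DvA α σ x y) h = (-(vA α σ x y) / σ ^ 2) * (inner ℝ (x - α • y) h : ℝ) := rfl
  rw [happ, Real.norm_eq_abs, abs_mul]
  have hv := vA_pos α σ x y
  have habs : |(-(vA α σ x y) / σ ^ 2)| = vA α σ x y / σ ^ 2 := by
    rw [abs_div, abs_neg, abs_of_pos hv, abs_of_pos (by positivity : (0:ℝ) < σ ^ 2)]
  rw [habs]
  have h2 := abs_real_inner_le_norm (x - α • y) h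
  have hk : ‖x - α • y‖ * vA α σ x y ≤ σ := by
    have := key_bound hσ ‖x - α • y‖
    rw [vA]; exact this
  rw [div_mul_eq_mul_div, div_le_iff₀ (by positivity : (0:ℝ) < σ ^ 2),
    show 1 / σ * ‖h‖ * σ ^ 2 = σ * ‖h‖ by field_simp]
  nlinarith [norm_nonneg (x - α • y), norm_nonneg h, abs_nonneg (inner ℝ (x - α • y) h : ℝ),
    mul_le_mul_of_nonneg_left h2 hv.le]

lemma hasFDerivAt_vA {σ : ℝ} (hσ : σ ≠ 0) (α : ℝ) (y x : EuclideanSpace ℝ (Fin d)) :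
    HasFDerivAt (fun x => vA α σ x y) (DvA α σ x y) x := by
  have hsub : HasFDerivAt (fun x : EuclideanSpace ℝ (Fin d) => x - α • y)
      (ContinuousLinearMap.id ℝ _) x := (hasFDerivAt_id x).sub_const (α • y)
  have hns := hsub.norm_sq
  have hc := hns.const_mul (-(2 * σ ^ 2)⁻¹)
  have hexp := hc.exp
  have heqf : (fun x : EuclideanSpace ℝ (Fin d) => vA α σ x y)
      = fun x => Real.exp (-(2 * σ ^ 2)⁻¹ * ‖x - α • y‖ ^ 2) := by
    funext z; rw [vA]; congr 1; ring
  rw [heqf]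
  refine hexp.congr_fderiv ?_
  have h2 : ((2:ℕ) • (innerSL ℝ (x - α • y)).comp
      (ContinuousLinearMap.id ℝ (EuclideanSpace ℝ (Fin d))))
      = (2:ℝ) • innerSL ℝ (x - α • y) := by
    ext h
    simp only [two_smul, ContinuousLinearMap.add_apply, ContinuousLinearMap.coe_comp',
      Function.comp_apply, ContinuousLinearMap.coe_id', id_eq, ContinuousLinearMap.smul_apply,
      smul_eq_mul]
    try ring
  rw [h2, smul_smul, smul_smul]
  simp only [DvA, vA]
  congr 1
  rw [show -(2 * σ ^ 2)⁻¹ * ‖x - α • y‖ ^ 2 = -‖x - α • y‖ ^ 2 / (2 * σ ^ 2) by ring]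
  field_simp

lemma continuous_vA (α σ : ℝ) (x : EuclideanSpace ℝ (Fin d)) :
    Continuous fun y => vA α σ x y := by
  unfold vA; fun_prop

lemma continuous_DvA (α σ : ℝ) (x : EuclideanSpace ℝ (Fin d)) :
    Continuous fun y => DvA α σ x y := by
  unfold DvA
  refine Continuous.smul (show Continuous fun y => -(vA α σ x y) / σ ^ 2 by unfold vA; fun_prop) ?_
  exact (innerSL ℝ).continuous.comp (by fun_prop)

lemma continuous_DvA_smulRight (α σ : ℝ) (x : EuclideanSpace ℝ (Fin d)) :
    Continuous fun y => (DvA α σ x y).smulRight y := by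
  have h1 : Continuous fun y : EuclideanSpace ℝ (Fin d) =>
      (ContinuousLinearMap.smulRightL ℝ (EuclideanSpace ℝ (Fin d)) (EuclideanSpace ℝ (Fin d)))
        (DvA α σ x y) :=
    (ContinuousLinearMap.smulRightL ℝ _ _).continuous.comp (continuous_DvA α σ x)
  exact h1.clm_apply continuous_id

end AuxJPM

set_option maxHeartbeats 1000000 in
/-- general setting: the Jacobian of the posterior mean
`m(x) = (1/V(x))·∫ v(x,y)·y dμ(y)` equals
`(α/σ²)·[(1/V(x))·∫ v(x,y)·yyᵀ dμ(y) − m(x)m(x)ᵀ]`, entrywise. -/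
theorem jacobian_posterior_mean_general
    (d : ℕ) (hd : 0 < d) (α σ : ℝ) (hα : 0 < α) (hσ : 0 < σ)
    (μ : Measure (EuclideanSpace ℝ (Fin d))) [IsProbabilityMeasure μ]
    (hmom : Integrable (fun y => ‖y‖ ^ 2) μ)
    (v : EuclideanSpace ℝ (Fin d) → EuclideanSpace ℝ (Fin d) → ℝ)
    (V : EuclideanSpace ℝ (Fin d) → ℝ)
    (m : EuclideanSpace ℝ (Fin d) → EuclideanSpace ℝ (Fin d))
    (hv : ∀ x y, v x y = Real.exp (-‖x - α • y‖ ^ 2 / (2 * σ ^ 2)))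
    (hV : ∀ x, V x = ∫ y, v x y ∂μ)
    (hm : ∀ x, m x = (V x)⁻¹ • ∫ y, v x y • y ∂μ) :
    (∀ x, 0 < V x) ∧ Differentiable ℝ m ∧
      ∀ x, (Matrix.of fun k l => (fderiv ℝ m x (EuclideanSpace.single l 1)) k) =
        Matrix.of fun k l => (α / σ ^ 2) *
          ((V x)⁻¹ * (∫ y, v x y * (y k * y l) ∂μ) - m x k * m x l) := by
  have hveq : v = vA α σ := funext fun x => funext fun y => hv x y
  subst hveq
  have hVeq : V = fun x => ∫ y, vA α σ x y ∂μ := funext hV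
  subst hVeq
  have hmeq : m = fun x => (∫ y, vA α σ x y ∂μ)⁻¹ • ∫ y, vA α σ x y • y ∂μ := funext hm
  subst hmeq
  -- abbreviations
  set Vf : EuclideanSpace ℝ (Fin d) → ℝ := fun x => ∫ y, vA α σ x y ∂μ with hVf
  set Wf : EuclideanSpace ℝ (Fin d) → EuclideanSpace ℝ (Fin d) :=
    fun x => ∫ y, vA α σ x y • y ∂μ with hWf
  -- integrabilities
  have hint_v : ∀ x, Integrable (fun y => vA α σ x y) μ := by
    intro x
    refine (integrable_const (1:ℝ)).mono' ((continuous_vA α σ x).aestronglyMeasurable) ?_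
    filter_upwards with y
    rw [Real.norm_eq_abs, abs_of_pos (vA_pos α σ x y)]
    exact vA_le_one α σ x y
  have hint_norm : Integrable (fun y : EuclideanSpace ℝ (Fin d) => ‖y‖) μ := by
    refine ((integrable_const (1:ℝ)).add hmom).mono'
      (continuous_norm.aestronglyMeasurable) ?_
    filter_upwards with y
    simp only [Pi.add_apply]
    rw [Real.norm_eq_abs, abs_of_nonneg (norm_nonneg y)]
    nlinarith [sq_nonneg (‖y‖ - 1), norm_nonneg y]
  have hint_vsmul : ∀ x, Integrable (fun y => vA α σ x y • y) μ := by
    intro x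
    refine hint_norm.mono' ?_ ?_
    · exact ((continuous_vA α σ x).smul continuous_id).aestronglyMeasurable
    · filter_upwards with y
      rw [norm_smul, Real.norm_eq_abs, abs_of_pos (vA_pos α σ x y)]
      nlinarith [vA_le_one α σ x y, vA_pos α σ x y, norm_nonneg y]
  have hint_D : ∀ x, Integrable (fun y => DvA α σ x y) μ := by
    intro x
    refine (integrable_const (1/σ)).mono' ((continuous_DvA α σ x).aestronglyMeasurable) ?_
    filter_upwards with y
    exact norm_DvA_le hσ α x y
  have hint_Dsr : ∀ x, Integrable (fun y => (DvA α σ x y).smulRight y) μ := by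
    intro x
    refine (hint_norm.const_mul (1/σ)).mono'
      ((continuous_DvA_smulRight α σ x).aestronglyMeasurable) ?_
    filter_upwards with y
    rw [ContinuousLinearMap.norm_smulRight_apply]
    exact mul_le_mul_of_nonneg_right (norm_DvA_le hσ α x y) (norm_nonneg y)
  -- positivity of V
  have hVpos : ∀ x, 0 < Vf x := by
    intro x
    rw [hVf]
    rw [integral_pos_iff_support_of_nonneg (fun y => (vA_pos α σ x y).le) (hint_v x)]
    have : Function.support (fun y => vA α σ x y) = Set.univ := by
      ext y; simp [Function.mem_support, (vA_pos α σ x y).ne']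
    rw [this]
    simp
  -- derivative of V
  have hV' : ∀ x, HasFDerivAt Vf (∫ y, DvA α σ x y ∂μ) x := by
    intro x₀
    rw [hVf]
    refine hasFDerivAt_integral_of_dominated_of_fderiv_le (s := Set.univ)
      (F := fun x y => vA α σ x y) (F' := fun x y => DvA α σ x y)
      (bound := fun _ => 1/σ) Filter.univ_mem ?_ (hint_v x₀) ?_
      ?_ (integrable_const (1/σ)) ?_
    · filter_upwards with x using (continuous_vA α σ x).aestronglyMeasurable
    · exact (continuous_DvA α σ x₀).aestronglyMeasurable
    · filter_upwards with y
      intro x _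
      exact norm_DvA_le hσ α x y
    · filter_upwards with y
      intro x _
      exact hasFDerivAt_vA hσ.ne' α y x
  -- derivative of W
  have hW' : ∀ x, HasFDerivAt Wf (∫ y, (DvA α σ x y).smulRight y ∂μ) x := by
    intro x₀
    rw [hWf]
    refine hasFDerivAt_integral_of_dominated_of_fderiv_le (s := Set.univ)
      (F := fun x y => vA α σ x y • y) (F' := fun x y => (DvA α σ x y).smulRight y)
      (bound := fun y => 1/σ * ‖y‖) Filter.univ_mem ?_ (hint_vsmul x₀) ?_
      ?_ (hint_norm.const_mul (1/σ)) ?_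
    · filter_upwards with x using
        ((continuous_vA α σ x).smul continuous_id).aestronglyMeasurable
    · exact (continuous_DvA_smulRight α σ x₀).aestronglyMeasurable
    · filter_upwards with y
      intro x _
      rw [ContinuousLinearMap.norm_smulRight_apply]
      exact mul_le_mul_of_nonneg_right (norm_DvA_le hσ α x y) (norm_nonneg y)
    · filter_upwards with y
      intro x _
      exact (hasFDerivAt_vA hσ.ne' α y x).smul_const y
  -- derivative of m
  have hm' : ∀ x, HasFDerivAt (fun x => (Vf x)⁻¹ • Wf x)
      ((Vf x)⁻¹ • (∫ y, (DvA α σ x y).smulRight y ∂μ) +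
        ((-(Vf x ^ 2)⁻¹) • (∫ y, DvA α σ x y ∂μ)).smulRight (Wf x)) x := by
    intro x
    have hinv : HasFDerivAt (fun x => (Vf x)⁻¹)
        ((-(Vf x ^ 2)⁻¹) • (∫ y, DvA α σ x y ∂μ)) x :=
      (hasDerivAt_inv (hVpos x).ne').comp_hasFDerivAt x (hV' x)
    exact hinv.smul (hW' x)
  refine ⟨hVpos, fun x => ((hm' x).differentiableAt : _), ?_⟩
  intro x
  have hfd : fderiv ℝ (fun x => (Vf x)⁻¹ • Wf x) x
      = (Vf x)⁻¹ • (∫ y, (DvA α σ x y).smulRight y ∂μ) +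
        ((-(Vf x ^ 2)⁻¹) • (∫ y, DvA α σ x y ∂μ)).smulRight (Wf x) := (hm' x).fderiv
  ext k l
  simp only [Matrix.of_apply]
  rw [hfd]
  set e : EuclideanSpace ℝ (Fin d) := EuclideanSpace.single l 1 with he
  -- pointwise formula for DvA applied to e
  have hDe : ∀ y : EuclideanSpace ℝ (Fin d),
      DvA α σ x y e = (-(vA α σ x y) / σ ^ 2) * (x l - α * y l) := by
    intro y
    have h0 : DvA α σ x y e = (-(vA α σ x y) / σ ^ 2) * (inner ℝ (x - α • y) e : ℝ) := rfl
    rw [h0, he, EuclideanSpace.inner_single_right]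
    simp [PiLp.sub_apply, PiLp.smul_apply, smul_eq_mul]
  have hnorme : ‖e‖ = 1 := by
    rw [he, EuclideanSpace.norm_single]; norm_num
  -- integrabilities of scalar families
  have habs_coord : ∀ (y : EuclideanSpace ℝ (Fin d)) (i : Fin d), |y i| ≤ ‖y‖ := by
    intro y i
    have := abs_real_inner_le_norm y (EuclideanSpace.single i (1:ℝ))
    rw [EuclideanSpace.inner_single_right, EuclideanSpace.norm_single] at this
    simpa using this
  have hcont_coord : ∀ i : Fin d,
      Continuous fun y : EuclideanSpace ℝ (Fin d) => y i := by
    intro i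
    exact (EuclideanSpace.proj i).continuous
  have hint_vk : ∀ i : Fin d, Integrable (fun y => vA α σ x y * y i) μ := by
    intro i
    refine hint_norm.mono' ((continuous_vA α σ x).mul (hcont_coord i)).aestronglyMeasurable ?_
    filter_upwards with y
    rw [Real.norm_eq_abs, abs_mul, abs_of_pos (vA_pos α σ x y)]
    nlinarith [vA_le_one α σ x y, vA_pos α σ x y, habs_coord y i, abs_nonneg (y i),
      norm_nonneg y]
  have hint_vkl : ∀ i j : Fin d, Integrable (fun y => vA α σ x y * (y i * y j)) μ := by
    intro i j
    refine hmom.mono' ((continuous_vA α σ x).mul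
      ((hcont_coord i).mul (hcont_coord j))).aestronglyMeasurable ?_
    filter_upwards with y
    rw [Real.norm_eq_abs, abs_mul, abs_of_pos (vA_pos α σ x y), abs_mul]
    nlinarith [vA_le_one α σ x y, vA_pos α σ x y, habs_coord y i, habs_coord y j,
      abs_nonneg (y i), abs_nonneg (y j), norm_nonneg y,
      mul_le_mul (habs_coord y i) (habs_coord y j) (abs_nonneg (y j)) (norm_nonneg y)]
  have hint_De_smul : Integrable (fun y => (DvA α σ x y e) • y) μ := by
    refine (hint_norm.const_mul (1/σ)).mono' ?_ ?_
    · exact (((continuous_DvA α σ x).clm_apply continuous_const).smul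
        continuous_id).aestronglyMeasurable
    · filter_upwards with y
      rw [norm_smul]
      refine mul_le_mul_of_nonneg_right ?_ (norm_nonneg y)
      calc ‖DvA α σ x y e‖ ≤ ‖DvA α σ x y‖ * ‖e‖ := (DvA α σ x y).le_opNorm e
        _ ≤ 1/σ := by rw [hnorme, mul_one]; exact norm_DvA_le hσ α x y
  have hproj : ∀ (f : EuclideanSpace ℝ (Fin d) → EuclideanSpace ℝ (Fin d)),
      Integrable f μ → ∀ i : Fin d, (∫ y, f y ∂μ) i = ∫ y, f y i ∂μ := by
    intro f hf i
    have h := (EuclideanSpace.proj i).integral_comp_comm hf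
    simpa [PiLp.proj_apply] using h.symm
  -- the scalar integrals
  have hVDe : (∫ y, DvA α σ x y ∂μ) e
      = (-(x l) / σ ^ 2) * Vf x + (α / σ ^ 2) * ∫ y, vA α σ x y * y l ∂μ := by
    rw [ContinuousLinearMap.integral_apply (hint_D x) e]
    have hsplit : (fun y => DvA α σ x y e)
        = fun y => (-(x l) / σ ^ 2) * vA α σ x y + (α / σ ^ 2) * (vA α σ x y * y l) := by
      funext y; rw [hDe]; ring
    rw [hsplit, integral_add ((hint_v x).const_mul _) ((hint_vk l).const_mul _),
      integral_const_mul, integral_const_mul, hVf]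
  have hWDek : ((∫ y, (DvA α σ x y).smulRight y ∂μ) e) k
      = (-(x l) / σ ^ 2) * (∫ y, vA α σ x y * y k ∂μ)
        + (α / σ ^ 2) * ∫ y, vA α σ x y * (y l * y k) ∂μ := by
    rw [ContinuousLinearMap.integral_apply (hint_Dsr x) e]
    have h1 : (fun y => ((DvA α σ x y).smulRight y) e) = fun y => (DvA α σ x y e) • y := by
      funext y; rw [ContinuousLinearMap.smulRight_apply]
    rw [h1, hproj _ hint_De_smul k]
    have h2 : (fun y => ((DvA α σ x y e) • y) k)
        = fun y => (-(x l) / σ ^ 2) * (vA α σ x y * y k)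
          + (α / σ ^ 2) * (vA α σ x y * (y l * y k)) := by
      funext y
      rw [PiLp.smul_apply, smul_eq_mul, hDe]
      ring
    rw [h2, integral_add ((hint_vk k).const_mul _) ((hint_vkl l k).const_mul _),
      integral_const_mul, integral_const_mul]
  have hWfk : (Wf x) k = ∫ y, vA α σ x y * y k ∂μ := by
    simp only [hWf]
    rw [hproj _ (hint_vsmul x) k]
    exact integral_congr_ae (Filter.Eventually.of_forall fun y => rfl)
  -- now put everything together
  have hlhs : ((Vf x)⁻¹ • (∫ y, (DvA α σ x y).smulRight y ∂μ) +
      ((-(Vf x ^ 2)⁻¹) • (∫ y, DvA α σ x y ∂μ)).smulRight (Wf x)) e k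
      = (Vf x)⁻¹ * (((∫ y, (DvA α σ x y).smulRight y ∂μ)) e) k
        + ((-(Vf x ^ 2)⁻¹) * ((∫ y, DvA α σ x y ∂μ) e)) * (Wf x) k := by
    rw [ContinuousLinearMap.add_apply, ContinuousLinearMap.smul_apply,
      ContinuousLinearMap.smulRight_apply, ContinuousLinearMap.smul_apply]
    rw [PiLp.add_apply, PiLp.smul_apply, PiLp.smul_apply, smul_eq_mul, smul_eq_mul]
    rfl
  rw [hlhs, hWDek, hVDe, hWfk]
  -- the m-coordinates on the RHS
  have hmk : ∀ i : Fin d, ((Vf x)⁻¹ • Wf x) i = (Vf x)⁻¹ * ∫ y, vA α σ x y * y i ∂μ := by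
    intro i
    rw [PiLp.smul_apply, smul_eq_mul]
    congr 1
    simp only [hWf]
    rw [hproj _ (hint_vsmul x) i]
    exact integral_congr_ae (Filter.Eventually.of_forall fun y => rfl)
  rw [hmk k, hmk l]
  have hswap : (∫ y, vA α σ x y * (y k * y l) ∂μ) = ∫ y, vA α σ x y * (y l * y k) ∂μ := by
    congr 1; funext y; ring
  rw [hswap]
  have hVne : Vf x ≠ 0 := (hVpos x).ne'
  set A := Vf x
  set B := ∫ y, vA α σ x y * y k ∂μ
  set C := ∫ y, vA α σ x y * y l ∂μ
  set D := ∫ y, vA α σ x y * (y l * y k) ∂μ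
  field_simp
  ring
end

section
/- Let d be a positive integer, let α, σ be positive real numbers, and let μ be a probability measure on ℝ^d with finite second moment (∫ ‖y‖² dμ(y) < ∞). For x ∈ ℝ^d define v(x, y) = exp(-‖x − α·y‖² / (2σ²)), V(x) = ∫ v(x, y) dμ(y), and m(x) = (1/V(x))·∫ v(x, y)·y dμ(y). Then V(x) > 0 for all x, the function x ↦ log V(x) is differentiable on ℝ^d, and its gradient at every x equals -(1/σ²)·( x − α·m(x) ). -/
open scoped BigOperators
open MeasureTheory

section Aux

variable {E : Type*} [NormedAddCommGroup E] [InnerProductSpace ℝ E]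

lemma aux_texp_le (σ t : ℝ) (hσ : 0 < σ) (ht : 0 ≤ t) :
    t * Real.exp (-t ^ 2 / (2 * σ ^ 2)) ≤ 2 * σ := by
  rcases le_or_gt t (2 * σ) with h | h
  · calc t * Real.exp (-t ^ 2 / (2 * σ ^ 2)) ≤ t * 1 := by
          apply mul_le_mul_of_nonneg_left _ ht
          rw [Real.exp_le_one_iff]
          apply div_nonpos_of_nonpos_of_nonneg
          · nlinarith
          · positivity
      _ ≤ 2 * σ := by linarith
  · have ht0 : 0 < t := lt_trans (by positivity) h
    have hs : 0 < t ^ 2 / (2 * σ ^ 2) := by positivity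
    have hle : t ^ 2 / (2 * σ ^ 2) ≤ Real.exp (t ^ 2 / (2 * σ ^ 2)) := by
      linarith [Real.add_one_le_exp (t ^ 2 / (2 * σ ^ 2))]
    rw [neg_div, Real.exp_neg]
    have hinv : (Real.exp (t ^ 2 / (2 * σ ^ 2)))⁻¹ ≤ (t ^ 2 / (2 * σ ^ 2))⁻¹ :=
      inv_anti₀ hs hle
    calc t * (Real.exp (t ^ 2 / (2 * σ ^ 2)))⁻¹
        ≤ t * (t ^ 2 / (2 * σ ^ 2))⁻¹ := by
          exact mul_le_mul_of_nonneg_left hinv ht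
      _ = 2 * σ ^ 2 / t := by field_simp
      _ ≤ 2 * σ := by rw [div_le_iff₀ ht0]; nlinarith

lemma aux_hasFDerivAt (α σ : ℝ) (hσ : 0 < σ) (y x : E) :
    HasFDerivAt (fun x : E => Real.exp (-‖x - α • y‖ ^ 2 / (2 * σ ^ 2)))
      ((-(σ ^ 2)⁻¹ * Real.exp (-‖x - α • y‖ ^ 2 / (2 * σ ^ 2))) • (innerSL ℝ (x - α • y))) x := by
  have h1 : HasFDerivAt (fun x : E => x - α • y) (ContinuousLinearMap.id ℝ E) x :=
    (hasFDerivAt_id x).sub_const _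
  have h2 := h1.norm_sq
  have h3 := (h2.const_mul (-(2 * σ ^ 2)⁻¹)).exp
  have heq : (fun x : E => Real.exp (-(2 * σ ^ 2)⁻¹ * ‖x - α • y‖ ^ 2)) =
      fun x : E => Real.exp (-‖x - α • y‖ ^ 2 / (2 * σ ^ 2)) := by
    funext z; ring_nf
  rw [heq] at h3
  convert h3 using 1
  ext h
  have hσ2 : (σ : ℝ) ^ 2 ≠ 0 := by positivity
  simp only [ContinuousLinearMap.coe_smul', Pi.smul_apply, ContinuousLinearMap.smul_apply,
    ContinuousLinearMap.comp_id, innerSL_apply_apply, smul_eq_mul]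
  have : -(2 * σ ^ 2)⁻¹ * ‖x - α • y‖ ^ 2 = -‖x - α • y‖ ^ 2 / (2 * σ ^ 2) := by ring
  rw [this]
  field_simp
  ring

end Aux


set_option maxHeartbeats 1000000 in
/-- general setting: the gradient of `x ↦ log V(x)` with
`V(x) = ∫ v(x,y) dμ(y)` equals `-(1/σ²) • (x − α • m(x))`, where `m(x)` is the
posterior mean. -/
theorem gradient_log_density_general
    (d : ℕ) (hd : 0 < d) (α σ : ℝ) (hα : 0 < α) (hσ : 0 < σ)
    (μ : Measure (EuclideanSpace ℝ (Fin d))) [IsProbabilityMeasure μ]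
    (hmom : Integrable (fun y => ‖y‖ ^ 2) μ)
    (v : EuclideanSpace ℝ (Fin d) → EuclideanSpace ℝ (Fin d) → ℝ)
    (V : EuclideanSpace ℝ (Fin d) → ℝ)
    (m : EuclideanSpace ℝ (Fin d) → EuclideanSpace ℝ (Fin d))
    (hv : ∀ x y, v x y = Real.exp (-‖x - α • y‖ ^ 2 / (2 * σ ^ 2)))
    (hV : ∀ x, V x = ∫ y, v x y ∂μ)
    (hm : ∀ x, m x = (V x)⁻¹ • ∫ y, v x y • y ∂μ) :
    (∀ x, 0 < V x) ∧ Differentiable ℝ (fun x => Real.log (V x)) ∧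
      ∀ x, gradient (fun z => Real.log (V z)) x =
        (-(1 / σ ^ 2)) • (x - α • m x) := by
  have hσ2 : (σ : ℝ) ^ 2 ≠ 0 := by positivity
  -- basic facts about v
  have hv_pos : ∀ x y, 0 < v x y := fun x y => by rw [hv]; exact Real.exp_pos _
  have hv_le : ∀ x y, v x y ≤ 1 := by
    intro x y
    rw [hv, Real.exp_le_one_iff]
    apply div_nonpos_of_nonpos_of_nonneg
    · simp [sq_nonneg]
    · positivity
  have hv_cont : ∀ x, Continuous (fun y : EuclideanSpace ℝ (Fin d) => v x y) := by
    intro x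
    have : (fun y : EuclideanSpace ℝ (Fin d) => v x y)
        = fun y => Real.exp (-‖x - α • y‖ ^ 2 / (2 * σ ^ 2)) := funext fun y => hv x y
    rw [this]
    fun_prop
  -- integrability of v x ·
  have hVint : ∀ x, Integrable (fun y : EuclideanSpace ℝ (Fin d) => v x y) μ := by
    intro x
    refine (integrable_const (1 : ℝ)).mono' (hv_cont x).aestronglyMeasurable ?_
    filter_upwards with y
    rw [Real.norm_eq_abs, abs_of_pos (hv_pos x y)]
    exact hv_le x y
  -- positivity of V
  have hVpos : ∀ x, 0 < V x := by
    intro x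
    rw [hV]
    rw [integral_pos_iff_support_of_nonneg_ae (Filter.Eventually.of_forall fun y => (hv_pos x y).le)
      (hVint x)]
    have : Function.support (fun y : EuclideanSpace ℝ (Fin d) => v x y) = Set.univ := by
      ext y; simp [(hv_pos x y).ne']
    rw [this]
    simp
  -- first moment integrability
  have hy_int : Integrable (fun y : EuclideanSpace ℝ (Fin d) => ‖y‖) μ := by
    refine (hmom.add (integrable_const 1)).mono' (continuous_norm.aestronglyMeasurable) ?_
    filter_upwards with y
    simp only [norm_norm, Pi.add_apply]
    nlinarith [norm_nonneg y]
  have hvy_int : ∀ x, Integrable (fun y : EuclideanSpace ℝ (Fin d) => v x y • y) μ := by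
    intro x
    refine hy_int.mono' (((hv_cont x).smul continuous_id).aestronglyMeasurable) ?_
    filter_upwards with y
    rw [norm_smul, Real.norm_eq_abs, abs_of_pos (hv_pos x y)]
    calc v x y * ‖y‖ ≤ 1 * ‖y‖ :=
          mul_le_mul_of_nonneg_right (hv_le x y) (norm_nonneg y)
      _ = ‖y‖ := one_mul _
  -- the pointwise derivative
  set L : EuclideanSpace ℝ (Fin d) → EuclideanSpace ℝ (Fin d) →
      (EuclideanSpace ℝ (Fin d) →L[ℝ] ℝ) :=
    fun x y => (-(σ ^ 2)⁻¹ * v x y) • innerSL ℝ (x - α • y) with hL_def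
  have hL : ∀ x y, HasFDerivAt (fun x => v x y) (L x y) x := by
    intro x y
    simp only [hL_def, hv]
    exact aux_hasFDerivAt α σ hσ y x
  -- the norm bound
  have hLnorm : ∀ x y, ‖L x y‖ ≤ 2 / σ := by
    intro x y
    have hLxy : L x y = (-(σ ^ 2)⁻¹ * v x y) • innerSL ℝ (x - α • y) := rfl
    have h1 : ‖x - α • y‖ * Real.exp (-‖x - α • y‖ ^ 2 / (2 * σ ^ 2)) ≤ 2 * σ :=
      aux_texp_le σ _ hσ (norm_nonneg _)
    calc ‖L x y‖ ≤ ‖-(σ ^ 2)⁻¹ * v x y‖ * ‖innerSL ℝ (x - α • y)‖ := by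
          rw [hLxy]; exact ContinuousLinearMap.opNorm_smul_le _ _
      _ = (σ ^ 2)⁻¹ * (‖x - α • y‖ * Real.exp (-‖x - α • y‖ ^ 2 / (2 * σ ^ 2))) := by
          rw [innerSL_apply_norm, Real.norm_eq_abs,
            abs_of_neg (mul_neg_of_neg_of_pos (neg_lt_zero.mpr (by positivity)) (hv_pos x y)), hv]
          ring
      _ ≤ (σ ^ 2)⁻¹ * (2 * σ) := mul_le_mul_of_nonneg_left h1 (by positivity)
      _ = 2 / σ := by field_simp
  have hLcont : ∀ x, Continuous (fun y : EuclideanSpace ℝ (Fin d) => L x y) := by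
    intro x
    simp only [hL_def]
    exact (continuous_const.mul (hv_cont x)).smul
      ((innerSL ℝ).continuous.comp (continuous_const.sub (continuous_const_smul α)))
  have hLint : ∀ x, Integrable (fun y : EuclideanSpace ℝ (Fin d) => L x y) μ := by
    intro x
    refine (integrable_const (2 / σ)).mono' (hLcont x).aestronglyMeasurable ?_
    filter_upwards with y using hLnorm x y
  -- derivative of V
  have hVderiv : ∀ x, HasFDerivAt V (∫ y, L x y ∂μ) x := by
    intro x₀
    have key : HasFDerivAt (fun x => ∫ y, v x y ∂μ) (∫ y, L x₀ y ∂μ) x₀ := by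
      apply hasFDerivAt_integral_of_dominated_of_fderiv_le (bound := fun _ => 2 / σ)
        (F' := fun x y => L x y) (s := Set.univ) Filter.univ_mem
      · filter_upwards with x using (hv_cont x).aestronglyMeasurable
      · exact hVint x₀
      · exact (hLcont x₀).aestronglyMeasurable
      · filter_upwards with y
        intro x hx
        exact hLnorm x y
      · exact integrable_const _
      · filter_upwards with y
        intro x hx
        exact hL x y
    have hVeq : V = fun x => ∫ y, v x y ∂μ := funext hV
    rw [hVeq]
    exact key
  -- the vector form of the derivative
  set u : EuclideanSpace ℝ (Fin d) → EuclideanSpace ℝ (Fin d) → EuclideanSpace ℝ (Fin d) :=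
    fun x y => (-(σ ^ 2)⁻¹ * v x y) • (x - α • y) with hu_def
  have hu_int : ∀ x, Integrable (fun y => u x y) μ := by
    intro x
    have h1 : Integrable (fun y : EuclideanSpace ℝ (Fin d) => (-(σ ^ 2)⁻¹ * v x y) • x) μ :=
      ((hVint x).const_mul _).smul_const x
    have h2 : Integrable
        (fun y : EuclideanSpace ℝ (Fin d) => (-(σ ^ 2)⁻¹ * v x y) • (α • y)) μ := by
      have h3 : Integrable (fun y : EuclideanSpace ℝ (Fin d)
          => (-(σ ^ 2)⁻¹) • (α • (v x y • y))) μ := (((hvy_int x).smul α).smul (-(σ ^ 2)⁻¹))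
      refine h3.congr ?_
      filter_upwards with y
      show (-(σ ^ 2)⁻¹) • (α • (v x y • y)) = (-(σ ^ 2)⁻¹ * v x y) • (α • y)
      module
    refine (h1.sub h2).congr ?_
    filter_upwards with y
    simp only [Pi.sub_apply, hu_def, smul_sub]
  have hLi : ∀ x, (∫ y, L x y ∂μ) = innerSL ℝ (∫ y, u x y ∂μ) := by
    intro x
    ext h
    rw [ContinuousLinearMap.integral_apply (hLint x) h]
    have hpt : ∀ y : EuclideanSpace ℝ (Fin d), L x y h = inner ℝ h (u x y) := by
      intro y
      simp only [hL_def, hu_def, ContinuousLinearMap.coe_smul', Pi.smul_apply, innerSL_apply_apply,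
        smul_eq_mul]
      rw [real_inner_smul_right, real_inner_comm]
    simp_rw [hpt]
    rw [integral_inner (hu_int x), innerSL_apply_apply]
    exact real_inner_comm _ _
  -- compute the integral of u
  have hu_integral : ∀ x, (∫ y, u x y ∂μ) = (-(σ ^ 2)⁻¹) • (V x • x - α • (V x • m x)) := by
    intro x
    have hmx : (∫ y, v x y • y ∂μ) = V x • m x := by
      rw [hm, smul_smul, mul_inv_cancel₀ (hVpos x).ne', one_smul]
    have h1 : (fun y => u x y) =
        fun y => (-(σ ^ 2)⁻¹) • ((v x y • x) - (α • (v x y • y))) := by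
      funext y
      simp only [hu_def, smul_sub]
      module
    rw [h1, integral_smul]
    congr 1
    have h2 : Integrable (fun y : EuclideanSpace ℝ (Fin d) => α • (v x y • y)) μ :=
      (hvy_int x).smul α
    rw [integral_sub ((hVint x).smul_const x) h2, integral_smul_const, integral_smul, hmx, hV]
  -- derivative of log V
  have hlogderiv : ∀ x, HasGradientAt (fun z => Real.log (V z))
      ((-(1 / σ ^ 2)) • (x - α • m x)) x := by
    intro x
    have h1 : HasFDerivAt (fun z => Real.log (V z)) ((V x)⁻¹ • (∫ y, L x y ∂μ)) x :=
      (hVderiv x).log (hVpos x).ne'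
    rw [hLi x, hu_integral x] at h1
    rw [hasGradientAt_iff_hasFDerivAt]
    refine h1.congr_fderiv ?_
    ext h
    simp only [InnerProductSpace.toDual_apply_apply, ContinuousLinearMap.coe_smul', Pi.smul_apply,
      innerSL_apply_apply, smul_eq_mul]
    rw [real_inner_smul_left, real_inner_smul_left]
    rw [inner_sub_left, inner_sub_left, real_inner_smul_left, real_inner_smul_left,
      real_inner_smul_left, real_inner_smul_left]
    have hVne : V x ≠ 0 := (hVpos x).ne'
    field_simp
  refine ⟨hVpos, ?_, ?_⟩
  · intro x
    exact ((hlogderiv x).hasFDerivAt).differentiableAt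
  · intro x
    exact (hlogderiv x).gradient
end
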